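/- Let K be a finite set of positive integers and p = (p_k)_{k∈K} a probability vector which is not concentrated on a single degree (there exist k ≠ k' with p_k > 0 and p_{k'} > 0). Let ρ > 0 and suppose Θ_N ∈ (0,1) satisfies ρ Σ_{k∈K} k² p_k/(1+ρ k Θ_N) = Σ_{k∈K} k p_k. Set Θ_{N₀} = max(0, 1 − 1/(ρ E_p(k))), where E_p(k) = Σ_k k p_k. Then Θ_{N₀} < Θ_N: the endemic infection probability on the heterogeneous network is strictly larger than on the homogeneous network with the same mean connectivity. -/

import Mathlib

lemma tangent_key (c μ x : ℝ) (hc : 0 < c) (hμ : 0 < μ) (hx : 0 ≤ x) :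
    x^2/(1+c*x) - (μ^2/(1+c*μ) + (2*μ+c*μ^2)/(1+c*μ)^2 * (x-μ))
      = (x-μ)^2 / ((1+c*x)*(1+c*μ)^2) := by
  have h1 : (1 + c*x) ≠ 0 := by positivity
  have h2 : (1 + c*μ) ≠ 0 := by positivity
  field_simp
  ring

lemma tangent_ineq (c μ x : ℝ) (hc : 0 < c) (hμ : 0 < μ) (hx : 0 ≤ x) :
    μ^2/(1+c*μ) + (2*μ+c*μ^2)/(1+c*μ)^2 * (x-μ) ≤ x^2/(1+c*x) := by
  have := tangent_key c μ x hc hμ hx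
  have h : (0:ℝ) ≤ (x-μ)^2 / ((1+c*x)*(1+c*μ)^2) := by positivity
  linarith

lemma tangent_ineq_strict (c μ x : ℝ) (hc : 0 < c) (hμ : 0 < μ) (hx : 0 ≤ x)
    (hne : x ≠ μ) :
    μ^2/(1+c*μ) + (2*μ+c*μ^2)/(1+c*μ)^2 * (x-μ) < x^2/(1+c*x) := by
  have := tangent_key c μ x hc hμ hx
  have h : (0:ℝ) < (x-μ)^2 / ((1+c*x)*(1+c*μ)^2) := by
    have : x - μ ≠ 0 := sub_ne_zero.mpr hne
    positivity
  linarith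

/-- On a heterogeneous host contact network, the endemic infection probability
is strictly larger than on the homogeneous network with the same mean
connectivity. -/
theorem network_heterogeneity_raises_theta
    (K : Finset ℕ) (hK : ∀ k ∈ K, 0 < k)
    (p : ℕ → ℝ) (hp : ∀ k ∈ K, 0 ≤ p k) (hpsum : ∑ k ∈ K, p k = 1)
    (hhet : ∃ k ∈ K, ∃ k' ∈ K, k ≠ k' ∧ 0 < p k ∧ 0 < p k')
    (ρ : ℝ) (hρ : 0 < ρ)
    (ΘN : ℝ) (hΘN : ΘN ∈ Set.Ioo (0:ℝ) 1)
    (hfix : ρ * ∑ k ∈ K, (k:ℝ)^2 * p k / (1 + ρ * (k:ℝ) * ΘN) = ∑ k ∈ K, (k:ℝ) * p k)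
    (ΘN0 : ℝ)
    (hΘN0 : ΘN0 = max 0 (1 - 1 / (ρ * ∑ k ∈ K, (k:ℝ) * p k))) :
    ΘN0 < ΘN := by
  obtain ⟨hΘ0, hΘ1⟩ := hΘN
  set μ : ℝ := ∑ k ∈ K, (k:ℝ) * p k with hμdef
  set c : ℝ := ρ * ΘN with hcdef
  have hc : 0 < c := mul_pos hρ hΘ0
  obtain ⟨a, ha, b, hb, hab, hpa, hpb⟩ := hhet
  -- μ > 0
  have hμ : 0 < μ := by
    apply Finset.sum_pos' (fun k hk => mul_nonneg (by positivity) (hp k hk))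
    exact ⟨a, ha, mul_pos (by exact_mod_cast hK a ha) hpa⟩
  -- rewrite the fixed-point sum
  have hrw : ∑ k ∈ K, (k:ℝ)^2 * p k / (1 + ρ * (k:ℝ) * ΘN)
      = ∑ k ∈ K, ((k:ℝ)^2/(1+c*(k:ℝ))) * p k := by
    refine Finset.sum_congr rfl (fun k hk => ?_)
    have : 1 + ρ * (k:ℝ) * ΘN = 1 + c * (k:ℝ) := by rw [hcdef]; ring
    rw [this, div_mul_eq_mul_div]
  -- existence of k in K with p k > 0 and (k:ℝ) ≠ μ
  have hex : ∃ k ∈ K, 0 < p k ∧ (k:ℝ) ≠ μ := by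
    by_cases h : (a:ℝ) = μ
    · exact ⟨b, hb, hpb, by
        intro hbμ
        exact hab (Nat.cast_injective (h.trans hbμ.symm))⟩
    · exact ⟨a, ha, hpa, h⟩
  -- strict Jensen via tangent line
  have hjensen : μ^2/(1+c*μ) < ∑ k ∈ K, ((k:ℝ)^2/(1+c*(k:ℝ))) * p k := by
    have hlow : ∑ k ∈ K, (μ^2/(1+c*μ) + (2*μ+c*μ^2)/(1+c*μ)^2 * ((k:ℝ)-μ)) * p k
        = μ^2/(1+c*μ) := by
      simp only [add_mul, Finset.sum_add_distrib, ← Finset.mul_sum, hpsum, mul_one,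
        mul_assoc, sub_mul, Finset.sum_sub_distrib]
      ring
    rw [← hlow]
    obtain ⟨k0, hk0, hpk0, hk0μ⟩ := hex
    refine Finset.sum_lt_sum (fun k hk => ?_) ⟨k0, hk0, ?_⟩
    · exact mul_le_mul_of_nonneg_right
        (tangent_ineq c μ (k:ℝ) hc hμ (by positivity)) (hp k hk)
    · exact mul_lt_mul_of_pos_right
        (tangent_ineq_strict c μ (k0:ℝ) hc hμ (by positivity) hk0μ) hpk0
  -- derive 1 - 1/(ρ μ) < ΘN
  have hfix' : ρ * ∑ k ∈ K, ((k:ℝ)^2/(1+c*(k:ℝ))) * p k = μ := by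
    rw [← hrw]; exact hfix
  have hgt : ρ * (μ^2/(1+c*μ)) < μ := by
    calc ρ * (μ^2/(1+c*μ)) < ρ * ∑ k ∈ K, ((k:ℝ)^2/(1+c*(k:ℝ))) * p k :=
          by exact mul_lt_mul_of_pos_left hjensen hρ
      _ = μ := hfix'
  have hd : 0 < 1 + c*μ := by nlinarith
  have hkey : 1 - 1 / (ρ * μ) < ΘN := by
    have h1 : ρ * μ^2 < μ * (1 + c*μ) := by
      have e : ρ * (μ^2/(1+c*μ)) * (1+c*μ) = ρ * μ^2 := by field_simp
      nlinarith [mul_lt_mul_of_pos_right hgt hd]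
    have h2 : ρ * μ < 1 + c*μ := by
      have := (mul_lt_mul_iff_of_pos_right hμ).mp (by nlinarith : ρ * μ * μ < (1 + c*μ) * μ)
      exact this
    have hρμ : 0 < ρ * μ := mul_pos hρ hμ
    rw [sub_lt_iff_lt_add, ← sub_lt_iff_lt_add', lt_div_iff₀ hρμ]
    rw [hcdef] at h2
    nlinarith [h2]
  rw [hΘN0]
  exact max_lt hΘ0 hkey
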